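/- Let D denote the subspace of Matrix (Fin 3) (Fin 3) ℝ consisting of symmetric traceless matrices (Mᵀ = M and Matrix.trace M = 0). If U is an ℝ-submodule of Matrix (Fin 3) (Fin 3) ℝ with U ≤ D such that Q * M * Qᵀ ∈ U for every Q ∈ SO(3) and every M ∈ U, then U = ⊥ or U = D. (The SO(3)-representation on deviatoric second-order tensors, i.e. ℍ², is irreducible.) -/

import Mathlib

open Matrix
set_option maxHeartbeats 1000000

/-- The space of symmetric traceless (deviatoric) 3×3 real matrices, i.e. ℍ². -/
def Dev3 : Submodule ℝ (Matrix (Fin 3) (Fin 3) ℝ) where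
  carrier := {M | Mᵀ = M ∧ Matrix.trace M = 0}
  add_mem' := by
    rintro a b ⟨ha1, ha2⟩ ⟨hb1, hb2⟩
    constructor
    · rw [Matrix.transpose_add, ha1, hb1]
    · rw [Matrix.trace_add, ha2, hb2, add_zero]
  zero_mem' := by
    constructor
    · exact Matrix.transpose_zero
    · simp
  smul_mem' := by
    rintro c a ⟨ha1, ha2⟩
    constructor
    · rw [Matrix.transpose_smul, ha1]
    · rw [Matrix.trace_smul, ha2, smul_zero]

noncomputable section Dev3Aux

def dS1 : Matrix (Fin 3) (Fin 3) ℝ := !![1,0,0;0,-1,0;0,0,-1]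
def dS2 : Matrix (Fin 3) (Fin 3) ℝ := !![-1,0,0;0,1,0;0,0,-1]
def dS3 : Matrix (Fin 3) (Fin 3) ℝ := !![-1,0,0;0,-1,0;0,0,1]
def dP : Matrix (Fin 3) (Fin 3) ℝ := !![0,0,1;1,0,0;0,1,0]
def dR : Matrix (Fin 3) (Fin 3) ℝ :=
  !![Real.sqrt 2/2, -(Real.sqrt 2/2), 0; Real.sqrt 2/2, Real.sqrt 2/2, 0; 0,0,1]

def dF12 : Matrix (Fin 3) (Fin 3) ℝ := !![0,1,0;1,0,0;0,0,0]
def dF13 : Matrix (Fin 3) (Fin 3) ℝ := !![0,0,1;0,0,0;1,0,0]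
def dF23 : Matrix (Fin 3) (Fin 3) ℝ := !![0,0,0;0,0,1;0,1,0]
def dD12 : Matrix (Fin 3) (Fin 3) ℝ := !![-1,0,0;0,1,0;0,0,0]
def dD23 : Matrix (Fin 3) (Fin 3) ℝ := !![0,0,0;0,-1,0;0,0,1]

lemma fin3_two : (⟨2, by norm_num⟩ : Fin 3) = 2 := rfl

lemma dS1T : dS1ᵀ = dS1 := by ext i j; fin_cases i <;> fin_cases j <;> rfl
lemma dS2T : dS2ᵀ = dS2 := by ext i j; fin_cases i <;> fin_cases j <;> rfl
lemma dS3T : dS3ᵀ = dS3 := by ext i j; fin_cases i <;> fin_cases j <;> rfl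
lemma dPT : dPᵀ = !![0,1,0;0,0,1;1,0,0] := by ext i j; fin_cases i <;> fin_cases j <;> rfl
lemma dRT : dRᵀ = !![Real.sqrt 2/2, Real.sqrt 2/2, 0; -(Real.sqrt 2/2), Real.sqrt 2/2, 0; 0,0,1] := by
  ext i j; fin_cases i <;> fin_cases j <;> rfl

lemma dS1_orth : dS1ᵀ * dS1 = 1 := by
  rw [dS1T]; ext i j; fin_cases i <;> fin_cases j <;>
    simp [dS1, Matrix.mul_apply, Fin.sum_univ_three, Matrix.one_apply, vecHead, vecTail]
lemma dS1_det : dS1.det = 1 := by simp [dS1, Matrix.det_fin_three]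
lemma dS2_orth : dS2ᵀ * dS2 = 1 := by
  rw [dS2T]; ext i j; fin_cases i <;> fin_cases j <;>
    simp [dS2, Matrix.mul_apply, Fin.sum_univ_three, Matrix.one_apply, vecHead, vecTail]
lemma dS2_det : dS2.det = 1 := by simp [dS2, Matrix.det_fin_three]
lemma dS3_orth : dS3ᵀ * dS3 = 1 := by
  rw [dS3T]; ext i j; fin_cases i <;> fin_cases j <;>
    simp [dS3, Matrix.mul_apply, Fin.sum_univ_three, Matrix.one_apply, vecHead, vecTail]
lemma dS3_det : dS3.det = 1 := by simp [dS3, Matrix.det_fin_three]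
lemma dP_orth : dPᵀ * dP = 1 := by
  rw [dPT]; ext i j; fin_cases i <;> fin_cases j <;>
    simp [dP, Matrix.mul_apply, Fin.sum_univ_three, Matrix.one_apply, vecHead, vecTail]
lemma dP_det : dP.det = 1 := by simp [dP, Matrix.det_fin_three]
lemma dR_orth : dRᵀ * dR = 1 := by
  have h : Real.sqrt 2 * Real.sqrt 2 = 2 := Real.mul_self_sqrt (by norm_num)
  rw [dRT]; ext i j; fin_cases i <;> fin_cases j <;>
    simp [dR, Matrix.mul_apply, Fin.sum_univ_three, Matrix.one_apply, vecHead, vecTail] <;>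
    nlinarith [h]
lemma dR_det : dR.det = 1 := by
  have h : Real.sqrt 2 * Real.sqrt 2 = 2 := Real.mul_self_sqrt (by norm_num)
  simp [dR, Matrix.det_fin_three]; nlinarith [h]

lemma conj_symm (Q M : Matrix (Fin 3) (Fin 3) ℝ) (h : Mᵀ = M) :
    (Q * M * Qᵀ)ᵀ = Q * M * Qᵀ := by
  rw [Matrix.transpose_mul, Matrix.transpose_mul, Matrix.transpose_transpose, h, mul_assoc]

lemma e01P (M : Matrix (Fin 3) (Fin 3) ℝ) : (dP * M * dPᵀ) 0 1 = M 2 0 := by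
  rw [dPT]; simp only [Matrix.mul_apply, Fin.sum_univ_three]; norm_num [dP, vecHead, vecTail, Matrix.cons_val_two]
lemma e10P (M : Matrix (Fin 3) (Fin 3) ℝ) : (dP * M * dPᵀ) 1 0 = M 0 2 := by
  rw [dPT]; simp only [Matrix.mul_apply, Fin.sum_univ_three]; norm_num [dP, vecHead, vecTail, Matrix.cons_val_two]
lemma e20P (M : Matrix (Fin 3) (Fin 3) ℝ) : (dP * M * dPᵀ) 2 0 = M 1 2 := by
  rw [dPT]; simp only [Matrix.mul_apply, Fin.sum_univ_three]; norm_num [dP, vecHead, vecTail, Matrix.cons_val_two]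
lemma e00P (M : Matrix (Fin 3) (Fin 3) ℝ) : (dP * M * dPᵀ) 0 0 = M 2 2 := by
  rw [dPT]; simp only [Matrix.mul_apply, Fin.sum_univ_three]; norm_num [dP, vecHead, vecTail, Matrix.cons_val_two]
lemma e11P (M : Matrix (Fin 3) (Fin 3) ℝ) : (dP * M * dPᵀ) 1 1 = M 0 0 := by
  rw [dPT]; simp only [Matrix.mul_apply, Fin.sum_univ_three]; norm_num [dP, vecHead, vecTail, Matrix.cons_val_two]

lemma e01R (M : Matrix (Fin 3) (Fin 3) ℝ) (h01 : M 0 1 = 0) (h10 : M 1 0 = 0) :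
    (dR * M * dRᵀ) 0 1 = (M 0 0 - M 1 1) / 2 := by
  have h : Real.sqrt 2 * Real.sqrt 2 = 2 := Real.mul_self_sqrt (by norm_num)
  rw [dRT]
  simp only [Matrix.mul_apply, Fin.sum_univ_three]
  norm_num [dR, vecHead, vecTail, Matrix.cons_val_two, h01, h10]
  linear_combination (M 0 0 - M 1 1) / 4 * h

lemma span_step (U : Submodule ℝ (Matrix (Fin 3) (Fin 3) ℝ))
    (hUinv : ∀ Q : Matrix (Fin 3) (Fin 3) ℝ, Qᵀ * Q = 1 → Q.det = 1 →
      ∀ M ∈ U, Q * M * Qᵀ ∈ U)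
    (M : Matrix (Fin 3) (Fin 3) ℝ) (hM : M ∈ U) (hsym : Mᵀ = M) (ha : M 0 1 ≠ 0) :
    Dev3 ≤ U := by
  have hs : ∀ i j, M j i = M i j := fun i j => congrFun (congrFun hsym i) j
  have h1 := hUinv dS1 dS1_orth dS1_det M hM
  have h2 := hUinv dS2 dS2_orth dS2_det M hM
  have h3 := hUinv dS3 dS3_orth dS3_det M hM
  have key : (4 * M 0 1) • dF12 = M - dS1 * M * dS1ᵀ - dS2 * M * dS2ᵀ + dS3 * M * dS3ᵀ := by
    rw [dS1T, dS2T, dS3T]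
    ext i j; fin_cases i <;> fin_cases j <;>
      simp only [Matrix.smul_apply, Matrix.sub_apply, Matrix.add_apply, Matrix.mul_apply,
        Fin.sum_univ_three, smul_eq_mul] <;>
      norm_num [dF12, dS1, dS2, dS3, vecHead, vecTail, Matrix.cons_val_two, fin3_two, hs 0 1, hs 0 2, hs 1 2] <;> ring
  have hF12 : dF12 ∈ U := by
    have hmem : (4 * M 0 1) • dF12 ∈ U := by
      rw [key]; exact U.add_mem (U.sub_mem (U.sub_mem hM h1) h2) h3
    have h4 := U.smul_mem (4 * M 0 1)⁻¹ hmem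
    rwa [inv_smul_smul₀ (mul_ne_zero (by norm_num) ha)] at h4
  have hF23 : dF23 ∈ U := by
    have h4 := hUinv dP dP_orth dP_det dF12 hF12
    have e : dP * dF12 * dPᵀ = dF23 := by
      rw [dPT]; ext i j; fin_cases i <;> fin_cases j <;>
        simp only [Matrix.mul_apply, Fin.sum_univ_three] <;>
        norm_num [dP, dF12, dF23, vecHead, vecTail, Matrix.cons_val_two]
    rwa [e] at h4
  have hF13 : dF13 ∈ U := by
    have h4 := hUinv dP dP_orth dP_det dF23 hF23
    have e : dP * dF23 * dPᵀ = dF13 := by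
      rw [dPT]; ext i j; fin_cases i <;> fin_cases j <;>
        simp only [Matrix.mul_apply, Fin.sum_univ_three] <;>
        norm_num [dP, dF23, dF13, vecHead, vecTail, Matrix.cons_val_two]
    rwa [e] at h4
  have hD12 : dD12 ∈ U := by
    have h4 := hUinv dR dR_orth dR_det dF12 hF12
    have hq : Real.sqrt 2 * Real.sqrt 2 = 2 := Real.mul_self_sqrt (by norm_num)
    have e : dR * dF12 * dRᵀ = dD12 := by
      rw [dRT]; ext i j; fin_cases i <;> fin_cases j <;>
        simp only [Matrix.mul_apply, Fin.sum_univ_three] <;>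
        norm_num [dR, dF12, dD12, vecHead, vecTail, Matrix.cons_val_two] <;>
        nlinarith [hq]
    rwa [e] at h4
  have hD23 : dD23 ∈ U := by
    have h4 := hUinv dP dP_orth dP_det dD12 hD12
    have e : dP * dD12 * dPᵀ = dD23 := by
      rw [dPT]; ext i j; fin_cases i <;> fin_cases j <;>
        simp only [Matrix.mul_apply, Fin.sum_univ_three] <;>
        norm_num [dP, dD12, dD23, vecHead, vecTail, Matrix.cons_val_two]
    rwa [e] at h4
  intro N hN
  obtain ⟨hNs, hNt⟩ := hN
  have hNs' : ∀ i j, N j i = N i j := fun i j => congrFun (congrFun hNs i) j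
  have htr : N 0 0 + N 1 1 + N 2 2 = 0 := by
    simpa [Matrix.trace, Fin.sum_univ_three, Matrix.diag] using hNt
  have hrep : N = N 0 1 • dF12 + N 0 2 • dF13 + N 1 2 • dF23 +
      (-(N 0 0)) • dD12 + N 2 2 • dD23 := by
    ext i j; fin_cases i <;> fin_cases j <;>
      simp only [Matrix.add_apply, Matrix.smul_apply, smul_eq_mul] <;>
      norm_num [dF12, dF13, dF23, dD12, dD23, vecHead, vecTail, Matrix.cons_val_two, fin3_two,
        hNs' 0 1, hNs' 0 2, hNs' 1 2] <;> linarith [htr]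
  rw [hrep]
  exact U.add_mem (U.add_mem (U.add_mem (U.add_mem (U.smul_mem _ hF12)
    (U.smul_mem _ hF13)) (U.smul_mem _ hF23)) (U.smul_mem _ hD12)) (U.smul_mem _ hD23)

end Dev3Aux

theorem deviatoric_representation_irreducible
    (U : Submodule ℝ (Matrix (Fin 3) (Fin 3) ℝ)) (hUD : U ≤ Dev3)
    (hUinv : ∀ Q : Matrix (Fin 3) (Fin 3) ℝ, Qᵀ * Q = 1 → Q.det = 1 →
      ∀ M ∈ U, Q * M * Qᵀ ∈ U) :
    U = ⊥ ∨ U = Dev3 := by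
  by_cases hbot : U = ⊥
  · exact Or.inl hbot
  right
  obtain ⟨M, hM, hMne⟩ := (Submodule.ne_bot_iff U).mp hbot
  obtain ⟨hsym, htr0⟩ := hUD hM
  have hs : ∀ i j, M j i = M i j := fun i j => congrFun (congrFun hsym i) j
  have htr : M 0 0 + M 1 1 + M 2 2 = 0 := by
    simpa [Matrix.trace, Fin.sum_univ_three, Matrix.diag] using htr0
  refine le_antisymm hUD ?_
  by_cases h01 : M 0 1 = 0
  swap
  · exact span_step U hUinv M hM hsym h01
  by_cases h02 : M 0 2 = 0
  swap
  · have hM1 : dP * M * dPᵀ ∈ U := hUinv dP dP_orth dP_det M hM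
    refine span_step U hUinv _ hM1 (conj_symm _ _ hsym) ?_
    rw [e01P, hs 0 2]; exact h02
  by_cases h12 : M 1 2 = 0
  swap
  · have hM1 : dP * M * dPᵀ ∈ U := hUinv dP dP_orth dP_det M hM
    have hM2 : dP * (dP * M * dPᵀ) * dPᵀ ∈ U := hUinv dP dP_orth dP_det _ hM1
    refine span_step U hUinv _ hM2 (conj_symm _ _ (conj_symm _ _ hsym)) ?_
    rw [e01P, e20P]
    exact h12
  by_cases hd1 : M 0 0 = M 1 1
  swap
  · have hM3 : dR * M * dRᵀ ∈ U := hUinv dR dR_orth dR_det M hM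
    refine span_step U hUinv _ hM3 (conj_symm _ _ hsym) ?_
    rw [e01R M h01 (by rw [hs 0 1]; exact h01)]
    intro hc
    apply hd1
    have : M 0 0 - M 1 1 = 0 := by linarith [hc]
    linarith
  by_cases hd2 : M 2 2 = M 0 0
  swap
  · have hM1 : dP * M * dPᵀ ∈ U := hUinv dP dP_orth dP_det M hM
    have hM4 : dR * (dP * M * dPᵀ) * dRᵀ ∈ U := hUinv dR dR_orth dR_det _ hM1
    refine span_step U hUinv _ hM4 (conj_symm _ _ (conj_symm _ _ hsym)) ?_
    rw [e01R _ (by rw [e01P, hs 0 2]; exact h02) (by rw [e10P]; exact h02)]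
    rw [e00P, e11P]
    intro hc
    apply hd2
    linarith
  exfalso
  apply hMne
  have h00 : M 0 0 = 0 := by linarith
  ext i j
  fin_cases i <;> fin_cases j <;>
    simp [Matrix.zero_apply] <;>
    first
      | linarith
      | (rw [hs 0 1]; linarith)
      | (rw [hs 0 2]; linarith)
      | (rw [hs 1 2]; linarith)
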